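/- Let (R, m, k) be a regular local ring with regular system of parameters u = (u_1, …, u_n), let Φ be an archimedean ordered semigroup and β_1, …, β_n ∈ Φ with β_i > 0. Let Φ_* = { Σ α_i β_i | α_i ∈ ℕ }, and for γ ∈ Φ_* let I_γ be the ideal of R generated by all monomials u_1^{α_1}⋯u_n^{α_n} with Σ α_i β_i ≥ γ. Then for every nonzero f ∈ R, the set Φ_f = { γ ∈ Φ_* | f ∈ I_γ } is finite. -/

import Mathlib

/-- Let `(R, m, k)` be a regular local ring (Noetherian local of Krull
dimension `n`, with `m` generated by the regular system of parameters `u_1, …, u_n`),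
`Φ` an archimedean linearly ordered semigroup and `β_1, …, β_n > 0` in `Φ`.  For
`γ ∈ Φ_* = {Σ α_i β_i}` let `I_γ` be the ideal generated by the monomials `u^α` with
`Σ α_i β_i ≥ γ`.  Then for every nonzero `f ∈ R` the set `Φ_f = {γ ∈ Φ_* | f ∈ I_γ}`
is finite. -/
theorem finite_monomial_orders
    {R : Type*} [CommRing R] [IsLocalRing R] [IsNoetherianRing R]
    {n : ℕ} (u : Fin n → R)
    (hu : IsLocalRing.maximalIdeal R = Ideal.span (Set.range u))
    (hdim : ringKrullDim R = n)
    {Φ : Type*} [AddCommMonoid Φ] [LinearOrder Φ] [IsOrderedCancelAddMonoid Φ] [Archimedean Φ]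
    (β : Fin n → Φ) (hβ : ∀ i, 0 < β i)
    (I : Φ → Ideal R)
    (hI : ∀ γ, I γ = Ideal.span
      {m | ∃ α : Fin n → ℕ, m = ∏ i, u i ^ α i ∧ γ ≤ ∑ i, α i • β i}) :
    ∀ f : R, f ≠ 0 →
      {γ : Φ | (∃ α : Fin n → ℕ, γ = ∑ i, α i • β i) ∧ f ∈ I γ}.Finite := by
  intro f hf
  -- Krull intersection: f is not in some power of the maximal ideal
  have hK := Ideal.iInf_pow_eq_bot_of_isLocalRing (IsLocalRing.maximalIdeal R)
    (Ideal.IsPrime.ne_top inferInstance)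
  have hN : ∃ N : ℕ, f ∉ (IsLocalRing.maximalIdeal R) ^ N := by
    by_contra h
    push_neg at h
    exact hf (by simpa [hK] using Ideal.mem_iInf.2 h : f ∈ (⊥ : Ideal R))
  obtain ⟨N, hfN⟩ := hN
  -- the bound
  set C : Φ := ∑ i, N • β i with hC
  -- each β i generates: find M i with C ≤ M i • β i
  choose M hM using fun i => Archimedean.arch C (hβ i)
  -- the candidate finite superset
  have hfin : ({α : Fin n → ℕ | ∀ i, α i ≤ M i}).Finite := by
    have : {α : Fin n → ℕ | ∀ i, α i ≤ M i} = Set.pi Set.univ (fun i => Set.Iic (M i)) := by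
      ext α; simp [Set.mem_pi, Pi.le_def]
    rw [this]
    exact Set.Finite.pi fun i => Set.finite_Iic _
  apply Set.Finite.subset (hfin.image (fun α => ∑ i, α i • β i))
  rintro γ ⟨⟨α, rfl⟩, hγ⟩
  -- first show γ ≤ C
  have hle : ∑ i, α i • β i ≤ C := by
    by_contra hgt
    push_neg at hgt
    -- then I γ ⊆ m ^ N
    apply hfN
    rw [hI] at hγ
    refine Ideal.span_le.2 ?_ hγ
    rintro x ⟨a, rfl, ha⟩
    -- some a i exceeds N
    have : ∃ i, N < a i := by
      by_contra hall
      push_neg at hall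
      have : ∑ i, a i • β i ≤ C :=
        Finset.sum_le_sum fun i _ => nsmul_le_nsmul_left (hβ i).le (hall i)
      exact absurd (ha.trans this) (not_le.2 hgt)
    obtain ⟨i, hi⟩ := this
    have hui : u i ∈ IsLocalRing.maximalIdeal R := by
      rw [hu]; exact Ideal.subset_span ⟨i, rfl⟩
    have hpow : u i ^ a i ∈ (IsLocalRing.maximalIdeal R) ^ N :=
      Ideal.pow_le_pow_right hi.le (Ideal.pow_mem_pow hui (a i))
    have := Finset.mul_prod_erase Finset.univ (fun j => u j ^ a j) (Finset.mem_univ i)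
    rw [SetLike.mem_coe, ← this]
    exact Ideal.mul_mem_right _ _ hpow
  -- hence each α i ≤ M i
  refine ⟨α, fun i => ?_, rfl⟩
  have h1 : α i • β i ≤ ∑ j, α j • β j :=
    Finset.single_le_sum (fun j _ => nsmul_nonneg (hβ j).le (α j)) (Finset.mem_univ i)
  have h2 : α i • β i ≤ M i • β i := le_trans h1 (le_trans hle (hM i))
  exact (nsmul_le_nsmul_iff_left (hβ i)).1 h2
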